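/- Let X be a Banach sequence space over a countably infinite index set I in which the canonical unit vectors (e_i)_{i∈I} form an OP-basis, let integers 1 ≤ r₁ < r₂ < ⋯ < r_N (N ≥ 2) be given, and for each 1 ≤ l ≤ N let T_l = T_{b^{(l)},φ_l} : X → X be a weighted pseudo-shift with weight sequence b^{(l)} = (b_i^{(l)})_{i∈I} of nonzero scalars and injective map φ_l : I → I. Suppose there exists a strictly increasing sequence (n_k)_{k≥1} of positive integers such that for every i ∈ I: for each 1 ≤ l ≤ N, ‖(∏_{v=0}^{r_l n_k−1} b^{(l)}_{φ_l^v(i)})^{−1} e_{φ_l^{r_l n_k}(i)}‖ → 0 and ‖(∏_{v=1}^{r_l n_k} b^{(l)}_{ψ_l^v(i)}) e_{ψ_l^{r_l n_k}(i)}‖ → 0 as k → ∞; and for all 1 ≤ s < l ≤ N, ‖(∏_{v=0}^{r_s n_k−1} b^{(s)}_{φ_s^v(i)})^{−1} (∏_{v=1}^{r_l n_k} b^{(l)}_{ψ_l^v(φ_s^{r_s n_k}(i))}) e_{ψ_l^{r_l n_k}(φ_s^{r_s n_k}(i))}‖ → 0 and ‖(∏_{v=0}^{r_l n_k−1} b^{(l)}_{φ_l^v(i)})^{−1}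 (∏_{v=1}^{r_s n_k} b^{(s)}_{ψ_s^v(φ_l^{r_l n_k}(i))}) e_{ψ_s^{r_s n_k}(φ_l^{r_l n_k}(i))}‖ → 0 as k → ∞. Then T₁^{r₁}, T₂^{r₂}, …, T_N^{r_N} satisfy the d-Hypercyclicity Criterion (with respect to (n_k)). -/
import Mathlib


open Filter Topology
open scoped Classical

/-- The vector `(∏_{v=1}^{n} b_{ψ^v(i)}) • e_{ψ^n(i)}`, where `ψ` is the partial inverse of the
injective map `φ`, with the convention that the whole term is `0` when `ψ^n(i)` is undefined
(i.e. when `i ∉ φ^n(I)`). -/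
noncomputable def backVec {I X : Type*} [AddCommGroup X] [Module ℂ X]
    (φ : I → I) (b : I → ℂ) (e : I → X) (n : ℕ) (i : I) : X :=
  if h : ∃ j, φ^[n] j = i then
    (∏ v ∈ Finset.range n, b (φ^[v] (Classical.choose h))) • e (Classical.choose h)
  else 0

/-- Continuous linear operators `T 0, …, T (N-1)` on `X` satisfy the d-Hypercyclicity Criterion
with respect to the strictly increasing sequence `(n k)` of positive integers. -/
def DHypCriterionWrt {X : Type*} [NormedAddCommGroup X] [NormedSpace ℂ X]
    {N : ℕ} (T : Fin N → X →L[ℂ] X) (n : ℕ → ℕ) : Prop :=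
  ∃ (X₀ : Set X) (Xs : Fin N → Set X) (S : Fin N → ℕ → X → X),
    Dense X₀ ∧ (∀ l, Dense (Xs l)) ∧
    (∀ l : Fin N, ∀ x ∈ X₀, Tendsto (fun k => ((T l) ^ (n k)) x) atTop (𝓝 0)) ∧
    (∀ l : Fin N, ∀ x ∈ Xs l, Tendsto (fun k => S l k x) atTop (𝓝 0)) ∧
    (∀ l i : Fin N, ∀ x ∈ Xs i,
      Tendsto (fun k => ((T l) ^ (n k)) (S i k x) - (if i = l then x else 0)) atTop (𝓝 0))

theorem stmt2
    {X : Type*} [NormedAddCommGroup X] [NormedSpace ℂ X] [CompleteSpace X]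
    [TopologicalSpace.SeparableSpace X] (hinfdim : ¬ FiniteDimensional ℂ X)
    {I : Type*} [Countable I] [Infinite I]
    (J : X →L[ℂ] (I → ℂ)) (hJ : Function.Injective J)
    (e : I → X) (he : ∀ i j : I, J (e i) j = if j = i then 1 else 0)
    (f : I → X →L[ℂ] ℂ) (hf : ∀ (i : I) (x : X), f i x = J x i)
    (hdense : Dense (Submodule.span ℂ (Set.range e) : Set X))
    (hOP : ∃ C : ℝ, ∀ i : I, ‖e i‖ * ‖f i‖ ≤ C)
    {N : ℕ} (hN : 2 ≤ N)
    (r : Fin N → ℕ) (hr1 : ∀ l, 1 ≤ r l) (hr : StrictMono r)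
    (b : Fin N → I → ℂ) (hb : ∀ l i, b l i ≠ 0)
    (φ : Fin N → I → I) (hφ : ∀ l, Function.Injective (φ l))
    (T : Fin N → X →L[ℂ] X)
    (hT : ∀ (l : Fin N) (x : X) (i : I), J (T l x) i = b l i * J x (φ l i))
    (n : ℕ → ℕ) (hn : StrictMono n) (hn1 : ∀ k, 1 ≤ n k)
    (hcond : ∀ i : I,
      (∀ l : Fin N,
        Tendsto (fun k => ‖(∏ v ∈ Finset.range (r l * n k), b l ((φ l)^[v] i))⁻¹ •
            e ((φ l)^[r l * n k] i)‖) atTop (𝓝 0) ∧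
        Tendsto (fun k => ‖backVec (φ l) (b l) e (r l * n k) i‖) atTop (𝓝 0)) ∧
      (∀ s l : Fin N, s < l →
        Tendsto (fun k => ‖(∏ v ∈ Finset.range (r s * n k), b s ((φ s)^[v] i))⁻¹ •
            backVec (φ l) (b l) e (r l * n k) ((φ s)^[r s * n k] i)‖) atTop (𝓝 0) ∧
        Tendsto (fun k => ‖(∏ v ∈ Finset.range (r l * n k), b l ((φ l)^[v] i))⁻¹ •
            backVec (φ s) (b s) e (r s * n k) ((φ l)^[r l * n k] i)‖) atTop (𝓝 0))) :
    DHypCriterionWrt (fun l : Fin N => (T l) ^ (r l)) n := by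
  
  classical
  have hprod_ne : ∀ (l : Fin N) (m : ℕ) (j : I),
      (∏ v ∈ Finset.range m, b l ((φ l)^[v] j)) ≠ 0 :=
    fun l m j => Finset.prod_ne_zero_iff.mpr fun v _ => hb l _
  have hTpow : ∀ (l : Fin N) (m : ℕ) (x : X) (i : I),
      J (((T l) ^ m) x) i = (∏ v ∈ Finset.range m, b l ((φ l)^[v] i)) * J x ((φ l)^[m] i) := by
    intro l m
    induction m with
    | zero => intro x i; simp
    | succ m ih =>
      intro x i
      have h1 : ((T l) ^ (m+1)) x = ((T l) ^ m) ((T l) x) := by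
        rw [pow_succ]; rfl
      rw [h1, ih, hT, Finset.prod_range_succ, Function.iterate_succ_apply']
      ring
  have hTe : ∀ (l : Fin N) (m : ℕ) (j : I),
      ((T l) ^ m) (e j) = backVec (φ l) (b l) e m j := by
    intro l m j
    by_cases h : ∃ a, (φ l)^[m] a = j
    · have ha₀ : (φ l)^[m] (Classical.choose h) = j := Classical.choose_spec h
      simp only [backVec]
      rw [dif_pos h]
      apply hJ
      funext i
      rw [hTpow, map_smul]
      simp only [Pi.smul_apply, smul_eq_mul, he]
      by_cases hi : i = Classical.choose h
      · subst hi; simp [ha₀]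
      · have hne : (φ l)^[m] i ≠ j := fun hc => hi (((hφ l).iterate m) (by rw [hc, ha₀]))
        simp [hne, hi]
    · simp only [backVec]
      rw [dif_neg h]
      apply hJ
      funext i
      rw [hTpow, map_zero]
      have hne : (φ l)^[m] i ≠ j := fun hc => h ⟨i, hc⟩
      simp [he, hne]
  have hback_img : ∀ (l : Fin N) (m : ℕ) (j : I),
      backVec (φ l) (b l) e m ((φ l)^[m] j)
        = (∏ v ∈ Finset.range m, b l ((φ l)^[v] j)) • e j := by
    intro l m j
    have h : ∃ a, (φ l)^[m] a = (φ l)^[m] j := ⟨j, rfl⟩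
    have hch : Classical.choose h = j := ((hφ l).iterate m) (Classical.choose_spec h)
    simp only [backVec]
    rw [dif_pos h, hch]
  set u : Fin N → ℕ → I → X := fun l k i =>
    (∏ v ∈ Finset.range (r l * n k), b l ((φ l)^[v] i))⁻¹ • e ((φ l)^[r l * n k] i) with hu
  set S : Fin N → ℕ → X → X := fun l k x =>
    if h : (Function.support fun i => J x i).Finite then
      ∑ i ∈ h.toFinset, (J x i) • u l k i
    else 0 with hSdef
  have hrep : ∀ x : X, x ∈ (Submodule.span ℂ (Set.range e) : Set X) →
      ∃ c : I →₀ ℂ, x = ∑ i ∈ c.support, c i • e i ∧ ∀ i, J x i = c i := by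
    intro x hx
    rw [SetLike.mem_coe, Finsupp.mem_span_range_iff_exists_finsupp] at hx
    obtain ⟨c, hc⟩ := hx
    have hxc : x = ∑ i ∈ c.support, c i • e i := by rw [← hc]; rfl
    refine ⟨c, hxc, fun i => ?_⟩
    rw [hxc, map_sum]
    simp only [map_smul, Finset.sum_apply, Pi.smul_apply, smul_eq_mul, he,
      mul_ite, mul_one, mul_zero]
    rw [Finset.sum_ite_eq c.support i c]
    by_cases hi : i ∈ c.support
    · simp [hi]
    · simp [hi, Finsupp.notMem_support_iff.mp hi]
  have hS_eq : ∀ (l : Fin N) (k : ℕ) (x : X) (c : I →₀ ℂ), (∀ i, J x i = c i) →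
      S l k x = ∑ i ∈ c.support, c i • u l k i := by
    intro l k x c hc
    have hset : (Function.support fun i => J x i) = ↑c.support := by
      ext i
      simp [Function.mem_support, hc i, Finsupp.mem_support_iff]
    have hfin : (Function.support fun i => J x i).Finite := by
      rw [hset]; exact c.support.finite_toSet
    have htf : hfin.toFinset = c.support := by
      ext i
      simp [Set.Finite.mem_toFinset, hset]
    rw [hSdef]
    simp only
    rw [dif_pos hfin, htf]
    exact Finset.sum_congr rfl fun i _ => by rw [hc]
  refine ⟨(Submodule.span ℂ (Set.range e) : Set X),
    fun _ => (Submodule.span ℂ (Set.range e) : Set X), S,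
    hdense, fun _ => hdense, ?_, ?_, ?_⟩
  · intro l x hx
    obtain ⟨c, hxc, hc⟩ := hrep x hx
    have hpow : ∀ k, (((T l) ^ (r l)) ^ (n k)) x
        = ∑ i ∈ c.support, c i • backVec (φ l) (b l) e (r l * n k) i := by
      intro k
      rw [← pow_mul, hxc, map_sum]
      exact Finset.sum_congr rfl fun i _ => by rw [map_smul, hTe]
    simp only [hpow]
    have : Tendsto (fun k => ∑ i ∈ c.support,
        c i • backVec (φ l) (b l) e (r l * n k) i) atTop (𝓝 (∑ i ∈ c.support, (0:X))) := by
      refine tendsto_finset_sum _ fun i _ => ?_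
      simpa using (tendsto_zero_iff_norm_tendsto_zero.mpr ((hcond i).1 l).2).const_smul (c i)
    simpa using this
  · intro l x hx
    obtain ⟨c, hxc, hc⟩ := hrep x hx
    simp only [hS_eq l _ x c hc]
    have : Tendsto (fun k => ∑ i ∈ c.support, c i • u l k i) atTop
        (𝓝 (∑ i ∈ c.support, (0:X))) := by
      refine tendsto_finset_sum _ fun i _ => ?_
      simpa using (tendsto_zero_iff_norm_tendsto_zero.mpr ((hcond i).1 l).1).const_smul (c i)
    simpa using this
  · intro l i' x hx
    obtain ⟨c, hxc, hc⟩ := hrep x hx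
    have key : ∀ k, (((T l) ^ (r l)) ^ (n k)) (S i' k x) =
        ∑ j ∈ c.support, c j •
          ((∏ v ∈ Finset.range (r i' * n k), b i' ((φ i')^[v] j))⁻¹ •
            backVec (φ l) (b l) e (r l * n k) ((φ i')^[r i' * n k] j)) := by
      intro k
      rw [← pow_mul, hS_eq i' k x c hc, map_sum]
      refine Finset.sum_congr rfl fun j _ => ?_
      rw [map_smul]
      congr 1
      rw [hu]
      simp only
      rw [map_smul, hTe]
    by_cases hil : i' = l
    · subst hil
      have hid : ∀ k, (((T i') ^ (r i')) ^ (n k)) (S i' k x) = x := by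
        intro k
        rw [key k, hxc]
        refine Finset.sum_congr rfl fun j _ => ?_
        rw [hback_img, inv_smul_smul₀ (hprod_ne _ _ _)]
      have hfun : (fun k => (((T i') ^ (r i')) ^ (n k)) (S i' k x)
          - if i' = i' then x else (0:X)) = fun _ => (0:X) := by
        funext k; simp [hid k]
      rw [hfun]
      exact tendsto_const_nhds
    · simp only [key, if_neg hil, sub_zero]
      have : Tendsto (fun k => ∑ j ∈ c.support, c j •
          ((∏ v ∈ Finset.range (r i' * n k), b i' ((φ i')^[v] j))⁻¹ •
            backVec (φ l) (b l) e (r l * n k) ((φ i')^[r i' * n k] j))) atTop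
          (𝓝 (∑ j ∈ c.support, (0:X))) := by
        refine tendsto_finset_sum _ fun j _ => ?_
        rcases lt_or_gt_of_ne hil with h | h
        · simpa using
            (tendsto_zero_iff_norm_tendsto_zero.mpr (((hcond j).2 i' l h).1)).const_smul (c j)
        · simpa using
            (tendsto_zero_iff_norm_tendsto_zero.mpr (((hcond j).2 l i' h).2)).const_smul (c j)
      simpa using this
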